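/- The α = 0 specialization of the recursion (n+1)³(n+1)³(2n)(3n²)u_{n+1} - (2n+1)(102n⁸+408n⁷+642n⁶+498n⁵+192n⁴+30n³)u_n + n³·n³·(2n+2)(3(n+1)²)u_{n-1} = 0 simplifies, after dividing by 6n²(n+1)², to Apéry's recursion (n+1)³ u_{n+1} = (2n+1)(17n²+17n+5) u_n - n³ u_{n-1}, which is satisfied by u_n = Σ_{k=0}^n C(n,k)² C(n+k,k)². -/

import Mathlib

noncomputable def Fk18 (n k : ℕ) : ℝ := ((n.choose k : ℝ)) ^ 2 * (((n + k).choose k : ℝ)) ^ 2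

noncomputable def cf18 (m k : ℕ) : ℝ :=
  4 * (2 * (m : ℝ) + 3) * ((k : ℝ) * (2 * (k : ℝ) + 1) - (2 * (m : ℝ) + 3) ^ 2)

set_option maxHeartbeats 2000000 in
lemma key18 (m k : ℕ) (hk : k ≤ m + 1) :
    ((m:ℝ)+2)^3 * Fk18 (m+2) (k+1)
      - (2*(m:ℝ)+3) * (17*((m:ℝ)+1)^2 + 17*((m:ℝ)+1) + 5) * Fk18 (m+1) (k+1)
      + ((m:ℝ)+1)^3 * Fk18 m (k+1)
    = cf18 m (k+1) * Fk18 (m+1) (k+1) - cf18 m k * Fk18 (m+1) k := by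
  have k1 : ((k:ℝ)+1) ≠ 0 := by positivity
  have m1 : ((m:ℝ)+1) ≠ 0 := by positivity
  have m2 : ((m:ℝ)+2) ≠ 0 := by positivity
  have hcast : ((m + 1 - k : ℕ) : ℝ) = (m:ℝ) + 1 - (k:ℝ) := by
    rw [Nat.cast_sub hk]; push_cast; ring
  have A1 : (((m+1).choose (k+1) : ℕ) : ℝ)
      = ((m+1).choose k : ℝ) * ((m:ℝ)+1-k) / ((k:ℝ)+1) := by
    rw [eq_div_iff k1, ← hcast]
    exact_mod_cast congrArg (Nat.cast : ℕ → ℝ) (Nat.choose_succ_right_eq (m+1) k)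
  have A2 : (((m+k+2).choose (k+1) : ℕ) : ℝ)
      = ((m+k+1).choose k : ℝ) * ((m:ℝ)+(k:ℝ)+2) / ((k:ℝ)+1) := by
    rw [eq_div_iff k1]
    have h := Nat.add_one_mul_choose_eq (m+1+k) k
    have h' : ((m+1+k+1) * (m+1+k).choose k : ℝ) = ((m+1+k+1).choose (k+1) : ℝ) * ((k:ℝ)+1) := by
      exact_mod_cast congrArg (Nat.cast : ℕ → ℝ) h
    rw [show m+1+k+1 = m+k+2 from by ring, show m+1+k = m+k+1 from by ring] at h'
    linarith [h']
  have A3 : (((m+2).choose (k+1) : ℕ) : ℝ) = ((m+1).choose k : ℝ) * ((m:ℝ)+2) / ((k:ℝ)+1) := by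
    rw [eq_div_iff k1]
    have h := Nat.add_one_mul_choose_eq (m+1) k
    have h' : ((m+1+1) * (m+1).choose k : ℝ) = ((m+2).choose (k+1) : ℝ) * ((k:ℝ)+1) := by
      exact_mod_cast congrArg (Nat.cast : ℕ → ℝ) h
    push_cast at h'
    linarith [h']
  have A4 : (((m+k+3).choose (k+1) : ℕ) : ℝ)
      = ((m+k+1).choose k : ℝ) * ((m:ℝ)+(k:ℝ)+2) * ((m:ℝ)+(k:ℝ)+3) / (((k:ℝ)+1) * ((m:ℝ)+2)) := by
    have h := Nat.choose_mul_succ_eq (m+k+2) (k+1)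
    have harg : m+k+2+1 - (k+1) = m+2 := by omega
    rw [harg] at h
    have h' : ((m+k+2).choose (k+1) : ℝ) * ((m:ℝ)+(k:ℝ)+3) = ((m+k+2+1).choose (k+1) : ℝ) * ((m:ℝ)+2) := by
      exact_mod_cast congrArg (Nat.cast : ℕ → ℝ) h
    rw [show m+k+2+1 = m+k+3 from by ring] at h'
    rw [A2] at h'
    field_simp at h' ⊢
    linarith [h']
  have A6 : (((m+k+1).choose (k+1) : ℕ) : ℝ) = ((m+k+1).choose k : ℝ) * ((m:ℝ)+1) / ((k:ℝ)+1) := by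
    rw [eq_div_iff k1]
    have h := Nat.choose_succ_right_eq (m+k+1) k
    have harg : m+k+1-k = m+1 := by omega
    rw [harg] at h
    exact_mod_cast congrArg (Nat.cast : ℕ → ℝ) h
  have A5 : ((m.choose (k+1) : ℕ) : ℝ)
      = ((m+1).choose k : ℝ) * ((m:ℝ)+1-k) * ((m:ℝ)-k) / (((k:ℝ)+1) * ((m:ℝ)+1)) := by
    have e5 : (m.choose (k+1) : ℝ) * ((m:ℝ)+1) = ((m+1).choose (k+1) : ℝ) * ((m:ℝ)-(k:ℝ)) := by
      rcases Nat.lt_or_ge k (m+1) with h | h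
      · have hkm : k ≤ m := Nat.lt_succ_iff.mp h
        have hnat := Nat.choose_mul_succ_eq m (k+1)
        have harg : m + 1 - (k+1) = m - k := by omega
        rw [harg] at hnat
        have hc : ((m - k : ℕ) : ℝ) = (m:ℝ) - (k:ℝ) := by
          rw [Nat.cast_sub hkm]
        have h' : (m.choose (k+1) : ℝ) * ((m:ℝ)+1) = ((m+1).choose (k+1) : ℝ) * ((m - k : ℕ) : ℝ) := by
          exact_mod_cast congrArg (Nat.cast : ℕ → ℝ) hnat
        rw [hc] at h'; exact h'
      · have hkm : k = m + 1 := le_antisymm hk h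
        subst hkm
        have z1 : m.choose (m+1+1) = 0 := Nat.choose_eq_zero_of_lt (by omega)
        have z2 : (m+1).choose (m+1+1) = 0 := Nat.choose_eq_zero_of_lt (by omega)
        rw [z1, z2]; push_cast; ring
    rw [A1] at e5
    field_simp at e5 ⊢
    linarith [e5]
  simp only [Fk18, cf18]
  rw [show m + 2 + (k+1) = m+k+3 from by ring, show m + 1 + (k+1) = m+k+2 from by ring,
     show m + (k+1) = m+k+1 from by ring, show m + 1 + k = m+k+1 from by ring]
  rw [A1, A2, A3, A4, A5, A6]
  field_simp
  push_cast
  ring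

lemma Fk18_self_succ (n k : ℕ) (h : n < k) : Fk18 n k = 0 := by
  simp [Fk18, Nat.choose_eq_zero_of_lt h]

lemma Fk18_zero (n : ℕ) : Fk18 n 0 = 1 := by simp [Fk18]

open Finset in
set_option maxHeartbeats 1000000 in
theorem stmt18 (u : ℕ → ℝ)
    (hu : ∀ n : ℕ, u n = ∑ k ∈ range (n + 1),
      ((n.choose k : ℝ)) ^ 2 * (((n + k).choose k : ℝ)) ^ 2) :
    ∀ n : ℕ, 1 ≤ n →
      (((n : ℝ) + 1) ^ 3 * ((n : ℝ) + 1) ^ 3 * (2 * (n : ℝ)) * (3 * (n : ℝ) ^ 2) * u (n + 1) -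
        (2 * (n : ℝ) + 1) * (102 * (n : ℝ) ^ 8 + 408 * (n : ℝ) ^ 7 + 642 * (n : ℝ) ^ 6 +
          498 * (n : ℝ) ^ 5 + 192 * (n : ℝ) ^ 4 + 30 * (n : ℝ) ^ 3) * u n +
        (n : ℝ) ^ 3 * (n : ℝ) ^ 3 * (2 * (n : ℝ) + 2) * (3 * ((n : ℝ) + 1) ^ 2) * u (n - 1) = 0)
      ∧
      (((n : ℝ) + 1) ^ 3 * u (n + 1) =
        (2 * (n : ℝ) + 1) * (17 * (n : ℝ) ^ 2 + 17 * (n : ℝ) + 5) * u n -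
          (n : ℝ) ^ 3 * u (n - 1)) := by
  intro n hn
  obtain ⟨m, rfl⟩ : ∃ m, n = m + 1 := ⟨n - 1, (Nat.succ_pred_eq_of_pos hn).symm⟩
  have s0 : u (m+1+1) = ∑ k ∈ range (m+2+1), Fk18 (m+2) k := by
    rw [hu]; rfl
  have s1 : u (m+1) = ∑ k ∈ range (m+2+1), Fk18 (m+1) k := by
    have e : ∑ k ∈ range (m+2+1), Fk18 (m+1) k = ∑ k ∈ range (m+1+1), Fk18 (m+1) k := by
      rw [Finset.sum_range_succ, Fk18_self_succ (m+1) (m+2) (by omega), add_zero]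
    rw [hu, e]; rfl
  have s2 : u m = ∑ k ∈ range (m+2+1), Fk18 m k := by
    have e : ∑ k ∈ range (m+2+1), Fk18 m k = ∑ k ∈ range (m+1), Fk18 m k := by
      rw [Finset.sum_range_succ, show m+2 = m+1+1 from rfl, Finset.sum_range_succ,
        Fk18_self_succ m (m+1+1) (by omega), Fk18_self_succ m (m+1) (by omega),
        add_zero, add_zero]
    rw [hu, e]; rfl
  have main : ∑ k ∈ range (m+2+1),
      (((m:ℝ)+2)^3 * Fk18 (m+2) k
        - (2*(m:ℝ)+3) * (17*((m:ℝ)+1)^2 + 17*((m:ℝ)+1) + 5) * Fk18 (m+1) k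
        + ((m:ℝ)+1)^3 * Fk18 m k) = 0 := by
    rw [Finset.sum_range_succ']
    have h1 : ∀ k ∈ range (m+2),
        (((m:ℝ)+2)^3 * Fk18 (m+2) (k+1)
          - (2*(m:ℝ)+3) * (17*((m:ℝ)+1)^2 + 17*((m:ℝ)+1) + 5) * Fk18 (m+1) (k+1)
          + ((m:ℝ)+1)^3 * Fk18 m (k+1))
        = cf18 m (k+1) * Fk18 (m+1) (k+1) - cf18 m k * Fk18 (m+1) k := by
      intro k hkmem
      exact key18 m k (by have := Finset.mem_range.mp hkmem; omega)
    rw [Finset.sum_congr rfl h1]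
    rw [Finset.sum_range_sub (fun k => cf18 m k * Fk18 (m+1) k) (m+2)]
    rw [Fk18_self_succ (m+1) (m+2) (by omega), Fk18_zero, Fk18_zero, Fk18_zero]
    simp only [cf18]
    push_cast
    ring
  have H2 : ((m:ℝ)+1+1)^3 * u (m+1+1)
      = (2*((m:ℝ)+1)+1) * (17*((m:ℝ)+1)^2 + 17*((m:ℝ)+1) + 5) * u (m+1)
        - ((m:ℝ)+1)^3 * u m := by
    rw [s0, s1, s2]
    rw [Finset.sum_add_distrib, Finset.sum_sub_distrib, ← Finset.mul_sum, ← Finset.mul_sum,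
      ← Finset.mul_sum] at main
    linear_combination main
  constructor
  · simp only [Nat.add_sub_cancel]
    push_cast
    linear_combination (6*((m:ℝ)+1)^3*((m:ℝ)+1+1)^3) * H2
  · simp only [Nat.add_sub_cancel]
    push_cast
    linear_combination H2
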